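/- Suppose the vertex set of a digraph D is partitioned into four sets E, F, G, H such that H is nonempty, E strictly out-dominates F, F strictly out-dominates G, G out-dominates H, H out-dominates E, each part induces a semicomplete digraph, and every vertex of G has an out-neighbour in E. Then any 2-king of the semicomplete digraph induced by G is a 2-king of D. -/
import Mathlib


/-- `A` is the arc relation of an oriented graph: no loops and no digons. -/
def IsOriented {V : Type*} (A : V → V → Prop) : Prop :=
  Irreflexive A ∧ ∀ x y, A x y → ¬ A y x

/-- `D` is strong: a directed path between each ordered pair of vertices. -/
def IsStrong {V : Type*} (A : V → V → Prop) : Prop :=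
  ∀ x y : V, Relation.ReflTransGen A x y

/-- The set `S` induces a strong subdigraph (all paths staying inside `S`). -/
def StrongOn {V : Type*} (A : V → V → Prop) (S : Set V) : Prop :=
  ∀ x ∈ S, ∀ y ∈ S, Relation.ReflTransGen (fun a b => a ∈ S ∧ b ∈ S ∧ A a b) x y

/-- The set `S` induces a tournament. -/
def TournamentOn {V : Type*} (A : V → V → Prop) (S : Set V) : Prop :=
  ∀ x ∈ S, ∀ y ∈ S, x ≠ y → A x y ∨ A y x

/-- The set `S` induces an acyclic digraph. -/
def AcyclicOn {V : Type*} (A : V → V → Prop) (S : Set V) : Prop :=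
  ∀ x : V, ¬ Relation.TransGen (fun a b => a ∈ S ∧ b ∈ S ∧ A a b) x x

/-- The set `S` induces a semicomplete digraph. -/
def SemicompleteOn {V : Type*} (A : V → V → Prop) (S : Set V) : Prop :=
  ∀ x ∈ S, ∀ y ∈ S, x ≠ y → A x y ∨ A y x

/-- `z` lies strictly inside the cyclic interval `]x,y[` for the cyclic order `σ`. -/
def CycBtw {V : Type*} [Fintype V] (σ : V ≃ Fin (Fintype.card V)) (x z y : V) : Prop :=
  0 < (σ z - σ x).val ∧ (σ z - σ x).val < (σ y - σ x).val

/-- In-round: a cyclic order such that for every arc `xy` and `z ∈ ]x,y[`, `zy` is an arc. -/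
def InRound {V : Type*} [Fintype V] (A : V → V → Prop) : Prop :=
  ∃ σ : V ≃ Fin (Fintype.card V), ∀ x y z : V, A x y → CycBtw σ x z y → A z y

/-- Out-round: a cyclic order such that for every arc `xy` and `z ∈ ]x,y[`, `xz` is an arc. -/
def OutRound {V : Type*} [Fintype V] (A : V → V → Prop) : Prop :=
  ∃ σ : V ≃ Fin (Fintype.card V), ∀ x y z : V, A x y → CycBtw σ x z y → A x z

/-- Every out-neighbourhood induces a transitive tournament. -/
def LocallyOutTransitive {V : Type*} (A : V → V → Prop) : Prop :=
  ∀ x : V, TournamentOn A {y | A x y} ∧ AcyclicOn A {y | A x y}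

/-- A hub: a nonempty set inducing a strong subdigraph, all of whose vertices are
in-neighbours of some vertex outside of it. -/
def Hub {V : Type*} (A : V → V → Prop) (H : Set V) : Prop :=
  H.Nonempty ∧ StrongOn A H ∧ ∃ x ∉ H, ∀ h ∈ H, A h x

/-- Locally semicomplete digraph: no loops, and every out- and in-neighbourhood
induces a semicomplete digraph (digons are allowed). -/
def LocallySemicomplete {V : Type*} (A : V → V → Prop) : Prop :=
  Irreflexive A ∧ (∀ x : V, SemicompleteOn A {y | A x y}) ∧
    ∀ x : V, SemicompleteOn A {y | A y x}

/-- The underlying undirected graph is connected. -/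
def ConnectedDigraph {V : Type*} (A : V → V → Prop) : Prop :=
  ∀ x y : V, Relation.ReflTransGen (fun a b => A a b ∨ A b a) x y

/-- A weak hub: a nonempty set inducing a strong subdigraph that is strictly
in-dominated or strictly out-dominated by some vertex outside of it. -/
def WeakHub {V : Type*} (A : V → V → Prop) (X : Set V) : Prop :=
  X.Nonempty ∧ StrongOn A X ∧
    ∃ x ∉ X, (∀ u ∈ X, A u x ∧ ¬ A x u) ∨ ∀ u ∈ X, A x u ∧ ¬ A u x

/-- A set `X` is mixed if some outside vertex has both an out-neighbour and an
in-neighbour in `X`. -/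
def MixedSet {V : Type*} (A : V → V → Prop) (X : Set V) : Prop :=
  ∃ x ∉ X, (∃ u ∈ X, A x u) ∧ ∃ v ∈ X, A v x

/-- `X` is an inclusion-wise maximal weak hub. -/
def MaxWeakHub {V : Type*} (A : V → V → Prop) (X : Set V) : Prop :=
  WeakHub A X ∧ ∀ Y : Set V, WeakHub A Y → X ⊆ Y → Y = X

theorem stmt19 {V : Type*} [Fintype V] (A : V → V → Prop)
    (E F G H : Set V)
    (hpart : E ∪ F ∪ G ∪ H = Set.univ)
    (hEF : Disjoint E F) (hEG : Disjoint E G) (hEH : Disjoint E H)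
    (hFG : Disjoint F G) (hFH : Disjoint F H) (hGH : Disjoint G H)
    (hHne : H.Nonempty)
    (hsE : SemicompleteOn A E) (hsF : SemicompleteOn A F)
    (hsG : SemicompleteOn A G) (hsH : SemicompleteOn A H)
    (hEdF : ∀ e ∈ E, ∀ f ∈ F, A e f ∧ ¬ A f e)
    (hFdG : ∀ f ∈ F, ∀ g ∈ G, A f g ∧ ¬ A g f)
    (hGdH : ∀ g ∈ G, ∀ h ∈ H, A g h)
    (hHdE : ∀ h ∈ H, ∀ e ∈ E, A h e)
    (hGE : ∀ g ∈ G, ∃ e ∈ E, A g e)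
    (g : V) (hg : g ∈ G)
    (hking : ∀ y ∈ G, y ≠ g → A g y ∨ ∃ z ∈ G, A g z ∧ A z y) :
    ∀ y : V, y ≠ g → A g y ∨ ∃ z : V, A g z ∧ A z y := by
  intro y hy
  have : y ∈ E ∪ F ∪ G ∪ H := hpart ▸ Set.mem_univ y
  rcases this with ((hyE | hyF) | hyG) | hyH
  · obtain ⟨h, hh⟩ := hHne
    exact Or.inr ⟨h, hGdH g hg h hh, hHdE h hh y hyE⟩
  · obtain ⟨e, he, hge⟩ := hGE g hg
    exact Or.inr ⟨e, hge, (hEdF e he y hyF).1⟩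
  · rcases hking y hyG hy with h | ⟨z, hz, h1, h2⟩
    · exact Or.inl h
    · exact Or.inr ⟨z, h1, h2⟩
  · exact Or.inl (hGdH g hg y hyH)
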